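/- Let k ∈ ℕ with k ≥ n_ξ + 1. Then for every x ∈ X one has inf over k-tuples (y¹,…,y^k) ∈ Y(x)^k of sup_{ξ∈U} min_{i∈[k]} f(x,y^i,ξ) equal to sup_{ξ∈U} min_{y∈Y(x)} f(x,y,ξ). Consequently opt(k) = opt(2RO), and a first-stage decision x ∈ X attains the optimal value of the k-adaptability problem if and only if it attains the optimal value of the two-stage robust problem. -/

import Mathlib

/-- Worst-case value `sup_{ξ ∈ U} min_{y ∈ S} F(y, ξ)` (minimum written as `sInf` of the image,
which is the minimum for a finite nonempty `S`). -/
noncomputable def worstVal {Eξ Ey : Type*} (U : Set Eξ) (S : Set Ey) (F : Ey → Eξ → ℝ) : ℝ :=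
  sSup ((fun ξ => sInf ((fun y => F y ξ) '' S)) '' U)

/-- The `k`-adaptability value for a fixed first stage:
`inf_{y¹,…,y^k ∈ S} sup_{ξ ∈ U} min_{i ∈ [k]} F(yⁱ, ξ)`. -/
noncomputable def kVal {Eξ Ey : Type*} (U : Set Eξ) (S : Set Ey) (F : Ey → Eξ → ℝ) (k : ℕ) : ℝ :=
  sInf {v | ∃ y : Fin k → Ey, (∀ i, y i ∈ S) ∧ v = worstVal U (Set.range y) F}

open Set

/-- From a nonempty finset of cardinality at most `k`, build a `k`-tuple whose range is it. -/
lemma exists_range_eq_coe {α : Type*} (I : Finset α) (hne : I.Nonempty) {k : ℕ}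
    (hk : I.card ≤ k) : ∃ g : Fin k → α, Set.range g = (I : Set α) := by
  obtain ⟨y₀, hy₀⟩ := hne
  refine ⟨fun i => I.toList.getD i y₀, ?_⟩
  ext a
  constructor
  · rintro ⟨i, rfl⟩
    by_cases h : (i : ℕ) < I.toList.length
    · simp only [List.getD_eq_getElem _ _ h]
      exact Finset.mem_coe.2 (Finset.mem_toList.1 (List.getElem_mem h))
    · show I.toList.getD i y₀ ∈ (I : Set α)
      rw [List.getD_eq_default _ _ (not_lt.1 h)]
      exact hy₀
  · intro ha
    have : a ∈ I.toList := Finset.mem_toList.2 ha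
    obtain ⟨j, hj, hja⟩ := List.mem_iff_getElem.1 this
    have hjk : j < k := lt_of_lt_of_le hj (by rwa [Finset.length_toList])
    exact ⟨⟨j, hjk⟩, by show I.toList.getD j y₀ = a; rw [List.getD_eq_getElem _ _ hj, hja]⟩

section Key

variable {nξ ny : ℕ}

/-- Key lemma: for `k ≥ nξ + 1`, concave bounded objectives, convex `U`, finite `S`,
the `k`-adaptability value equals the worst-case value. -/
lemma kVal_eq_worstVal (U : Set (EuclideanSpace ℝ (Fin nξ)))
    (S : Set (EuclideanSpace ℝ (Fin ny)))
    (F : EuclideanSpace ℝ (Fin ny) → EuclideanSpace ℝ (Fin nξ) → ℝ)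
    (hUconv : Convex ℝ U) (hUne : U.Nonempty)
    (hSfin : S.Finite) (hSne : S.Nonempty)
    (m M : ℝ) (hm : ∀ y ∈ S, ∀ ξ ∈ U, m ≤ F y ξ) (hM : ∀ y ∈ S, ∀ ξ ∈ U, F y ξ ≤ M)
    (hconc : ∀ y ∈ S, ConcaveOn ℝ U (F y))
    (k : ℕ) (hk : nξ + 1 ≤ k) :
    kVal U S F k = worstVal U S F := by
  classical
  have hk0 : 0 < k := lt_of_lt_of_le (Nat.succ_pos _) hk
  -- the "min" function for a subset T
  set g : Set (EuclideanSpace ℝ (Fin ny)) → EuclideanSpace ℝ (Fin nξ) → ℝ :=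
    fun T ξ => sInf ((fun y => F y ξ) '' T) with hg
  have himgfin : ∀ T ⊆ S, ∀ ξ, ((fun y => F y ξ) '' T).Finite :=
    fun T hT ξ => (hSfin.subset hT).image _
  have hbddB : ∀ T ⊆ S, ∀ ξ, BddBelow ((fun y => F y ξ) '' T) :=
    fun T hT ξ => (himgfin T hT ξ).bddBelow
  -- g T ξ ≤ F y ξ for y ∈ T
  have hg_le : ∀ T ⊆ S, ∀ y ∈ T, ∀ ξ, g T ξ ≤ F y ξ :=
    fun T hT y hy ξ => csInf_le (hbddB T hT ξ) ⟨y, hy, rfl⟩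
  -- m ≤ g T ξ
  have hg_ge : ∀ T ⊆ S, T.Nonempty → ∀ ξ ∈ U, m ≤ g T ξ := by
    rintro T hT ⟨y₀, hy₀⟩ ξ hξ
    exact le_csInf ⟨_, ⟨y₀, hy₀, rfl⟩⟩ (by rintro a ⟨y, hy, rfl⟩; exact hm y (hT hy) ξ hξ)
  -- g T ξ ≤ M
  have hg_leM : ∀ T ⊆ S, T.Nonempty → ∀ ξ ∈ U, g T ξ ≤ M := by
    rintro T hT ⟨y₀, hy₀⟩ ξ hξ
    exact (hg_le T hT y₀ hy₀ ξ).trans (hM y₀ (hT hy₀) ξ hξ)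
  -- antitonicity of g in T
  have hg_anti : ∀ T T', T ⊆ T' → T' ⊆ S → T.Nonempty → ∀ ξ, g T' ξ ≤ g T ξ := by
    intro T T' hTT' hT'S hTne ξ
    exact csInf_le_csInf (hbddB T' hT'S ξ) (hTne.image _) (Set.image_mono hTT')
  -- worstVal of a subset T
  have hwv : ∀ T ⊆ S, worstVal U T F = sSup ((g T) '' U) := fun T _ => rfl
  have hwv_bddA : ∀ T ⊆ S, T.Nonempty → BddAbove ((g T) '' U) := by
    intro T hT hTne
    exact ⟨M, by rintro a ⟨ξ, hξ, rfl⟩; exact hg_leM T hT hTne ξ hξ⟩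
  have hwv_le : ∀ ξ ∈ U, ∀ T ⊆ S, T.Nonempty → g T ξ ≤ worstVal U T F := by
    intro ξ hξ T hT hTne
    exact le_csSup (hwv_bddA T hT hTne) ⟨ξ, hξ, rfl⟩
  -- worstVal is antitone in T
  have hwv_anti : ∀ T T', T ⊆ T' → T' ⊆ S → T.Nonempty → worstVal U T' F ≤ worstVal U T F := by
    intro T T' hTT' hT'S hTne
    refine csSup_le (hUne.image _) ?_
    rintro a ⟨ξ, hξ, rfl⟩
    exact (hg_anti T T' hTT' hT'S hTne ξ).trans (hwv_le ξ hξ T (hTT'.trans hT'S) hTne)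
  set w := worstVal U S F with hw
  set K := {v | ∃ y : Fin k → EuclideanSpace ℝ (Fin ny),
    (∀ i, y i ∈ S) ∧ v = worstVal U (Set.range y) F} with hK
  obtain ⟨y₀, hy₀⟩ := id hSne
  have hKne : K.Nonempty := ⟨_, fun _ => y₀, fun _ => hy₀, rfl⟩
  have hKlb : ∀ v ∈ K, w ≤ v := by
    rintro v ⟨y, hyS, rfl⟩
    have hrne : (Set.range y).Nonempty := ⟨y ⟨0, hk0⟩, ⟨_, rfl⟩⟩
    exact hwv_anti (Set.range y) S (Set.range_subset_iff.2 hyS) subset_rfl hrne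
  have hge : w ≤ kVal U S F k := le_csInf hKne hKlb
  -- the hard direction: some element of K is ≤ w, via Helly
  have hle : kVal U S F k ≤ w := by
    by_contra hcon
    push_neg at hcon
    have hall : ∀ v ∈ K, w < v := by
      intro v hv
      by_contra hv'
      push_neg at hv'
      exact absurd (csInf_le ⟨w, hKlb⟩ hv) (not_le.2 (lt_of_le_of_lt hv' hcon))
    -- the convex sets
    set C : EuclideanSpace ℝ (Fin ny) → Set (EuclideanSpace ℝ (Fin nξ)) :=
      fun y => {ξ ∈ U | w < F y ξ} with hC
    set s : Finset (EuclideanSpace ℝ (Fin ny)) := hSfin.toFinset with hs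
    have hsS : (s : Set (EuclideanSpace ℝ (Fin ny))) = S := hSfin.coe_toFinset
    have hCconv : ∀ y ∈ s, Convex ℝ (C y) := by
      intro y hy
      have hyS : y ∈ S := by rwa [← hsS]
      rintro ξ₁ ⟨hξ₁U, hξ₁⟩ ξ₂ ⟨hξ₂U, hξ₂⟩ a b ha hb hab
      refine ⟨hUconv hξ₁U hξ₂U ha hb hab, ?_⟩
      have := (hconc y hyS).2 hξ₁U hξ₂U ha hb hab
      rw [smul_eq_mul, smul_eq_mul] at this
      by_cases ha' : 0 < a
      · have h1 : a * w < a * F y ξ₁ := mul_lt_mul_of_pos_left hξ₁ ha'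
        have h2 : b * w ≤ b * F y ξ₂ := mul_le_mul_of_nonneg_left hξ₂.le hb
        have h3 : a * w + b * w = w := by rw [← add_mul, hab, one_mul]
        linarith
      · have ha0 : a = 0 := le_antisymm (not_lt.1 ha') ha
        have hb1 : b = 1 := by linarith
        rw [ha0, hb1]
        simpa using hξ₂
    have hinter : ∀ I ⊆ s, I.card ≤ Module.finrank ℝ (EuclideanSpace ℝ (Fin nξ)) + 1 →
        (⋂ i ∈ I, C i).Nonempty := by
      intro I hIs hIcard
      rcases I.eq_empty_or_nonempty with rfl | hIne
      · simp
      have hIcard' : I.card ≤ k := by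
        rw [finrank_euclideanSpace_fin] at hIcard; omega
      obtain ⟨yt, hyt⟩ := exists_range_eq_coe I hIne hIcard'
      have hytS : ∀ i, yt i ∈ S := by
        intro i
        have : yt i ∈ (I : Set _) := hyt ▸ Set.mem_range_self i
        rw [← hsS]; exact hIs this
      have hmem : worstVal U (Set.range yt) F ∈ K := ⟨yt, hytS, rfl⟩
      have hwlt : w < worstVal U (Set.range yt) F := hall _ hmem
      have hrsub : Set.range yt ⊆ S := Set.range_subset_iff.2 hytS
      have hrne : (Set.range yt).Nonempty := ⟨yt ⟨0, hk0⟩, ⟨_, rfl⟩⟩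
      -- there is ξ ∈ U with g (range yt) ξ > w
      have : ∃ ξ ∈ U, w < g (Set.range yt) ξ := by
        by_contra h
        push_neg at h
        have : worstVal U (Set.range yt) F ≤ w := by
          refine csSup_le (hUne.image _) ?_
          rintro a ⟨ξ, hξ, rfl⟩; exact h ξ hξ
        exact absurd hwlt (not_lt.2 this)
      obtain ⟨ξ, hξU, hξ⟩ := this
      refine ⟨ξ, Set.mem_biInter ?_⟩
      intro i hiI
      have hiR : i ∈ Set.range yt := by rw [hyt]; exact hiI
      exact ⟨hξU, lt_of_lt_of_le hξ (hg_le (Set.range yt) hrsub i hiR ξ)⟩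
    have := Convex.helly_theorem' hCconv hinter
    obtain ⟨ξ, hξ⟩ := this
    have hξall : ∀ y ∈ S, w < F y ξ ∧ ξ ∈ U := by
      intro y hyS
      have hys : y ∈ s := by rw [← hsS] at hyS; exact hyS
      have := Set.mem_iInter₂.1 hξ y hys
      exact ⟨this.2, this.1⟩
    have hξU : ξ ∈ U := (hξall y₀ hy₀).2
    -- g S ξ > w since the min is attained on the finite set
    have himg : ((fun y => F y ξ) '' S).Finite := himgfin S subset_rfl ξ
    have hmemInf : g S ξ ∈ (fun y => F y ξ) '' S := (hSne.image _).csInf_mem himg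
    obtain ⟨y', hy'S, hy'⟩ := hmemInf
    have : w < g S ξ := hy' ▸ (hξall y' hy'S).1
    exact absurd (hwv_le ξ hξU S subset_rfl hSne) (not_le.2 this)
  exact le_antisymm hle hge

end Key

/-- Under objective uncertainty with a convex compact uncertainty set and a
continuous objective, concave in `ξ`, for `k ≥ n_ξ + 1` the `k`-adaptability problem and the
two-stage robust problem coincide: pointwise in `x`, in optimal value, and in optimal
first-stage solutions. -/
theorem stmt_1 (nx ny nξ : ℕ) (hnx : 0 < nx) (hny : 0 < ny) (hnξ : 0 < nξ)
    (X : Set (EuclideanSpace ℝ (Fin nx))) (hXcomp : IsCompact X) (hXne : X.Nonempty)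
    (Y : Set (EuclideanSpace ℝ (Fin ny))) (hYfin : Y.Finite) (hYne : Y.Nonempty)
    (hYint : ∀ y ∈ Y, ∀ i, ∃ z : ℤ, y i = (z : ℝ))
    (Yx : EuclideanSpace ℝ (Fin nx) → Set (EuclideanSpace ℝ (Fin ny)))
    (hYxsub : ∀ x ∈ X, Yx x ⊆ Y) (hYxne : ∀ x ∈ X, (Yx x).Nonempty)
    (U : Set (EuclideanSpace ℝ (Fin nξ))) (hUcomp : IsCompact U) (hUconv : Convex ℝ U)
    (hUne : U.Nonempty)
    (f : EuclideanSpace ℝ (Fin nx) → EuclideanSpace ℝ (Fin ny) →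
      EuclideanSpace ℝ (Fin nξ) → ℝ)
    (hfcont : Continuous fun p : EuclideanSpace ℝ (Fin nx) × EuclideanSpace ℝ (Fin ny) ×
      EuclideanSpace ℝ (Fin nξ) => f p.1 p.2.1 p.2.2)
    (hconc : ∀ x ∈ X, ∀ y ∈ Y, ConcaveOn ℝ U (f x y))
    (k : ℕ) (hk : nξ + 1 ≤ k) :
    (∀ x ∈ X, kVal U (Yx x) (f x) k = worstVal U (Yx x) (f x)) ∧
    sInf ((fun x => kVal U (Yx x) (f x) k) '' X) =
      sInf ((fun x => worstVal U (Yx x) (f x)) '' X) ∧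
    (∀ x ∈ X,
      kVal U (Yx x) (f x) k = sInf ((fun x' => kVal U (Yx x') (f x') k) '' X) ↔
      worstVal U (Yx x) (f x) = sInf ((fun x' => worstVal U (Yx x') (f x')) '' X)) := by
  have h1 : ∀ x ∈ X, kVal U (Yx x) (f x) k = worstVal U (Yx x) (f x) := by
    intro x hx
    have hcx : Continuous fun p : EuclideanSpace ℝ (Fin ny) × EuclideanSpace ℝ (Fin nξ) =>
        f x p.1 p.2 := hfcont.comp (Continuous.prodMk_right x)
    have hKcomp : IsCompact ((fun p : EuclideanSpace ℝ (Fin ny) × EuclideanSpace ℝ (Fin nξ) =>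
        f x p.1 p.2) '' (Y ×ˢ U)) := ((hYfin.isCompact).prod hUcomp).image hcx
    obtain ⟨m, hm⟩ := hKcomp.bddBelow
    obtain ⟨M, hM⟩ := hKcomp.bddAbove
    refine kVal_eq_worstVal U (Yx x) (f x) hUconv hUne (hYfin.subset (hYxsub x hx))
      (hYxne x hx) m M ?_ ?_ (fun y hy => hconc x hx y (hYxsub x hx hy)) k hk
    · intro y hy ξ hξ
      exact hm ⟨(y, ξ), Set.mk_mem_prod (hYxsub x hx hy) hξ, rfl⟩
    · intro y hy ξ hξ
      exact hM ⟨(y, ξ), Set.mk_mem_prod (hYxsub x hx hy) hξ, rfl⟩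
  have himg : (fun x => kVal U (Yx x) (f x) k) '' X
      = (fun x => worstVal U (Yx x) (f x)) '' X := Set.image_congr h1
  exact ⟨h1, by rw [himg], fun x hx => by rw [h1 x hx, himg]⟩
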